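/- (Kalai's formula) Let F be an IIA constitution on 3 alternatives with pairwise functions f^{a>b}, f^{b>c}, f^{c>a} : {-1,1}^n → {-1,1}, and let voters vote uniformly at random. Then the probability of a non-transitive outcome equals P(F) = (1 + E[f^{a>b}(x^{a>b}) f^{b>c}(x^{b>c})] + E[f^{b>c}(x^{b>c}) f^{c>a}(x^{c>a})] + E[f^{c>a}(x^{c>a}) f^{a>b}(x^{a>b})]) / 4. -/

import Mathlib

/-- The ±1 value of a bit. -/
noncomputable def sgn (b : Bool) : ℝ := if b then 1 else -1

/-- `x^{a>b}` vector of a profile. -/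
def pairVec {n : ℕ} (a b : Fin 3) (σ : Fin n → Equiv.Perm (Fin 3)) : Fin n → Bool :=
  fun i => decide (σ i a < σ i b)

lemma sgn_key (u v w : Bool) :
    (if u = v ∧ v = w then (4:ℝ) else 0) =
      1 + sgn u * sgn v + sgn v * sgn w + sgn w * sgn u := by
  cases u <;> cases v <;> cases w <;> simp [sgn] <;> norm_num

/-- Kalai's formula: for an IIA constitution on 3 alternatives with pairwise functions
`f^{a>b}, f^{b>c}, f^{c>a}`, the probability of a non-transitive outcome under uniform
voting equals `(1 + E[f^{a>b} f^{b>c}] + E[f^{b>c} f^{c>a}] + E[f^{c>a} f^{a>b}])/4`. -/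
theorem stmt_11 (n : ℕ) (fab fbc fca : (Fin n → Bool) → Bool) :
    ((Finset.univ.filter fun σ : Fin n → Equiv.Perm (Fin 3) =>
        fab (pairVec 0 1 σ) = fbc (pairVec 1 2 σ) ∧
        fbc (pairVec 1 2 σ) = fca (pairVec 2 0 σ)).card : ℝ) / 6^n =
    (1 + (∑ σ : Fin n → Equiv.Perm (Fin 3),
            sgn (fab (pairVec 0 1 σ)) * sgn (fbc (pairVec 1 2 σ))) / 6^n
       + (∑ σ : Fin n → Equiv.Perm (Fin 3),
            sgn (fbc (pairVec 1 2 σ)) * sgn (fca (pairVec 2 0 σ))) / 6^n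
       + (∑ σ : Fin n → Equiv.Perm (Fin 3),
            sgn (fca (pairVec 2 0 σ)) * sgn (fab (pairVec 0 1 σ))) / 6^n) / 4 := by
  have hcard : (Fintype.card (Fin n → Equiv.Perm (Fin 3)) : ℝ) = 6 ^ n := by
    simp [Fintype.card_perm, Nat.factorial]
  have h6 : (6:ℝ) ^ n ≠ 0 := by positivity
  have main :
      4 * ((Finset.univ.filter fun σ : Fin n → Equiv.Perm (Fin 3) =>
        fab (pairVec 0 1 σ) = fbc (pairVec 1 2 σ) ∧
        fbc (pairVec 1 2 σ) = fca (pairVec 2 0 σ)).card : ℝ) =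
      6 ^ n + (∑ σ : Fin n → Equiv.Perm (Fin 3),
            sgn (fab (pairVec 0 1 σ)) * sgn (fbc (pairVec 1 2 σ)))
       + (∑ σ : Fin n → Equiv.Perm (Fin 3),
            sgn (fbc (pairVec 1 2 σ)) * sgn (fca (pairVec 2 0 σ)))
       + (∑ σ : Fin n → Equiv.Perm (Fin 3),
            sgn (fca (pairVec 2 0 σ)) * sgn (fab (pairVec 0 1 σ))) := by
    have hc : ((Finset.univ.filter fun σ : Fin n → Equiv.Perm (Fin 3) =>
        fab (pairVec 0 1 σ) = fbc (pairVec 1 2 σ) ∧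
        fbc (pairVec 1 2 σ) = fca (pairVec 2 0 σ)).card : ℝ) =
        ∑ σ : Fin n → Equiv.Perm (Fin 3), if fab (pairVec 0 1 σ) = fbc (pairVec 1 2 σ) ∧
        fbc (pairVec 1 2 σ) = fca (pairVec 2 0 σ) then (1:ℝ) else 0 := by
      rw [Finset.sum_boole]
    have h1 : (6:ℝ)^n = ∑ _σ : Fin n → Equiv.Perm (Fin 3), (1:ℝ) := by
      rw [Finset.sum_const, nsmul_eq_mul, mul_one, Finset.card_univ, hcard]
    rw [hc, h1, Finset.mul_sum, ← Finset.sum_add_distrib, ← Finset.sum_add_distrib,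
      ← Finset.sum_add_distrib]
    refine Finset.sum_congr rfl fun σ _ => ?_
    have := sgn_key (fab (pairVec 0 1 σ)) (fbc (pairVec 1 2 σ)) (fca (pairVec 2 0 σ))
    rw [mul_ite, mul_one, mul_zero]
    exact this
  field_simp
  linear_combination main
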